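/- arXiv:2105.14981 — 2 statements merged into one kernel-verified Lean document; each statement's English description precedes it below -/
import Mathlib

section
/- For all n ≥ 0, the integral over [-1,1] of (1-t)·P_n^{(0,2)}(t)·P_n^{(1,1)}(t) dt equals 2(n+1). -/
open MeasureTheory intervalIntegral Finset

open Polynomial fwdDiff

/-- The Jacobi polynomial `P_n^{(a,b)}` with nonnegative integer parameters,
given by the standard finite-sum formula, normalized by
`P_n^{(a,b)}(1) = (a+1)_n / n!`. -/
noncomputable def jacobiP (a b n : ℕ) (x : ℝ) : ℝ :=
  ∑ s ∈ Finset.range (n + 1),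
    (Nat.choose (n + a) (n - s) : ℝ) * (Nat.choose (n + b) s : ℝ) *
      ((x - 1) / 2) ^ s * ((x + 1) / 2) ^ (n - s)

lemma beta_int (a b : ℕ) :
    ∫ t in (-1 : ℝ)..1, (t - 1) ^ a * (t + 1) ^ b
      = (-1) ^ a * 2 ^ (a + b + 1) * (Nat.factorial a) * (Nat.factorial b)
          / (Nat.factorial (a + b + 1)) := by
  induction a generalizing b with
  | zero =>
      simp only [pow_zero, one_mul, zero_add]
      have h1 : ∫ t in (-1 : ℝ)..1, (t + 1) ^ b = ∫ x in (0 : ℝ)..2, x ^ b := by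
        simpa [show (-1:ℝ)+1 = 0 by ring, show (1:ℝ)+1 = 2 by ring] using
          intervalIntegral.integral_comp_add_right (a := (-1:ℝ)) (b := 1)
          (fun x => x ^ b) 1
      rw [h1, integral_pow]
      rw [Nat.factorial_succ]
      have : ((0:ℕ).factorial : ℝ) = 1 := by norm_num [Nat.factorial]
      rw [this]
      push_cast
      rw [div_eq_div_iff (by positivity) (by positivity)]
      ring
  | succ a ih =>
      have key : ∫ t in (-1 : ℝ)..1, (t - 1) ^ (a + 1) * (t + 1) ^ b
          = ((1:ℝ) - 1) ^ (a+1) * ((1 + 1) ^ (b+1) / (b+1))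
            - ((-1:ℝ) - 1) ^ (a+1) * (((-1:ℝ) + 1) ^ (b+1) / (b+1))
            - ∫ t in (-1 : ℝ)..1, ((a+1 : ℝ) * (t - 1) ^ a) * ((t + 1) ^ (b+1) / (b+1)) := by
        apply intervalIntegral.integral_mul_deriv_eq_deriv_mul
          (u := fun t => (t - 1) ^ (a + 1)) (u' := fun t => (a+1 : ℝ) * (t - 1) ^ a)
          (v := fun t => (t + 1) ^ (b+1) / (b+1)) (v' := fun t => (t + 1) ^ b)
        · intro x _
          have h := ((hasDerivAt_id x).sub_const 1).pow (a+1)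
          have e : (fun t : ℝ => (t - 1) ^ (a + 1)) = (fun t => id t - 1) ^ (a+1) := by
            funext t; simp
          rw [e]
          simpa [mul_comm, Nat.add_sub_cancel] using h
        · intro x _
          have h := (((hasDerivAt_id x).add_const 1).pow (b+1)).div_const ((b:ℝ)+1)
          have hb : ((b:ℝ)+1) ≠ 0 := by positivity
          have heq : ((b:ℝ) + 1) * (x + 1) ^ b / ((b:ℝ)+1) = (x+1)^b := by
            field_simp
          simpa [heq] using h
        · apply Continuous.intervalIntegrable; fun_prop
        · apply Continuous.intervalIntegrable; fun_prop
      rw [key]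
      have h2 : ∫ t in (-1 : ℝ)..1, ((a+1 : ℝ) * (t - 1) ^ a) * ((t + 1) ^ (b+1) / (b+1))
          = ((a+1 : ℝ) / (b+1)) * ∫ t in (-1 : ℝ)..1, (t - 1) ^ a * (t + 1) ^ (b+1) := by
        rw [← intervalIntegral.integral_const_mul]
        apply intervalIntegral.integral_congr
        intro x _
        ring
      rw [h2, ih (b+1)]
      have hb : ((b:ℝ)+1) ≠ 0 := by positivity
      have hf : ((a + (b+1) + 1).factorial : ℝ) ≠ 0 := by
        exact_mod_cast Nat.factorial_ne_zero _
      have he : a + 1 + b + 1 = a + (b + 1) + 1 := by omega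
      rw [he]
      rw [Nat.factorial_succ (a), Nat.factorial_succ b]
      push_cast
      field_simp
      ring

lemma fwdDiff_iter_zero_fun (m : ℕ) :
    (Δ_[(1:ℝ)])^[m] (fun _ => (0:ℝ)) = fun _ => 0 := by
  induction m with
  | zero => rfl
  | succ m ih =>
      rw [Function.iterate_succ_apply,
        show Δ_[(1:ℝ)] (fun _ => (0:ℝ)) = fun _ => 0 from funext fun x => by simp [fwdDiff], ih]

lemma fwdDiff_poly_eval (p : Polynomial ℝ) :
    Δ_[(1:ℝ)] (fun x => p.eval x) = fun x => (p.comp (X + C 1) - p).eval x := by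
  funext x
  simp [fwdDiff, Polynomial.eval_comp]

lemma comp_sub_degree_lt (p : Polynomial ℝ) (hp : p.natDegree ≠ 0)
    (h0 : p.comp (X + C 1) - p ≠ 0) :
    (p.comp (X + C 1) - p).natDegree < p.natDegree := by
  have hpne : p ≠ 0 := fun h => hp (by simp [h])
  have h1 : ((X + C 1 : Polynomial ℝ)).natDegree = 1 := Polynomial.natDegree_X_add_C 1
  have hnd : (p.comp (X + C 1)).natDegree = p.natDegree := by
    rw [Polynomial.natDegree_comp, h1, mul_one]
  have hcne : p.comp (X + C 1) ≠ 0 := by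
    intro h
    rw [h, Polynomial.natDegree_zero] at hnd
    exact hp hnd.symm
  have hdeg : (p.comp (X + C 1)).degree = p.degree := by
    rw [Polynomial.degree_eq_natDegree hcne, Polynomial.degree_eq_natDegree hpne, hnd]
  have hm : (X + C (1:ℝ)).Monic := Polynomial.monic_X_add_C 1
  have hlc : (p.comp (X + C 1)).leadingCoeff = p.leadingCoeff := by
    rw [Polynomial.leadingCoeff_comp (by rw [h1]; exact one_ne_zero)]
    rw [hm.leadingCoeff]
    simp
  have hlt : (p.comp (X + C 1) - p).degree < p.degree := by
    have := Polynomial.degree_sub_lt hdeg hcne hlc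
    rwa [hdeg] at this
  exact Polynomial.natDegree_lt_natDegree h0 hlt

lemma fwdDiff_iter_poly (m : ℕ) (p : Polynomial ℝ) (hp : p.natDegree < m) :
    (Δ_[(1:ℝ)])^[m] (fun x => p.eval x) = fun _ => 0 := by
  induction m generalizing p with
  | zero => omega
  | succ m ih =>
      rw [Function.iterate_succ_apply, fwdDiff_poly_eval]
      rcases eq_or_ne (p.comp (X + C 1) - p) 0 with h0 | h0
      · rw [h0]
        simpa using fwdDiff_iter_zero_fun m
      · rcases eq_or_ne p.natDegree 0 with hd | hd
        · obtain ⟨c, rfl⟩ := Polynomial.natDegree_eq_zero.mp hd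
          simp at h0
        · exact ih _ (by have := comp_sub_degree_lt p hd h0; omega)

/-- Alternating binomial sum of evaluations of a polynomial of degree `< m` vanishes. -/
lemma alt_sum_poly (m : ℕ) (p : Polynomial ℝ) (hp : p.natDegree < m) :
    ∑ k ∈ range (m + 1), (-1 : ℝ) ^ k * (m.choose k) * p.eval (k : ℝ) = 0 := by
  have h := fwdDiff_iter_eq_sum_shift (1:ℝ) (fun x => p.eval x) m 0
  rw [fwdDiff_iter_poly m p hp] at h
  have h2 : ∑ k ∈ range (m + 1),
      ((-1 : ℤ) ^ (m - k) * (m.choose k)) • p.eval ((0:ℝ) + k • (1:ℝ)) = 0 := h.symm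
  have h3 : ∀ k ∈ range (m+1),
      (-1 : ℝ) ^ k * (m.choose k) * p.eval (k : ℝ)
        = (-1:ℝ)^m * (((-1 : ℤ) ^ (m - k) * (m.choose k)) • p.eval ((0:ℝ) + k • (1:ℝ))) := by
    intro k hk
    have hkm : k ≤ m := by simpa [Nat.lt_succ_iff] using hk
    have hsgn : (-1:ℝ)^m * (-1:ℝ)^(m-k) = (-1:ℝ)^k := by
      rw [← pow_add]
      have : m + (m - k) = 2*(m-k) + k := by omega
      rw [this, pow_add, pow_mul]
      norm_num
    simp only [zsmul_eq_mul, nsmul_eq_mul, mul_one, zero_add]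
    push_cast
    rw [← hsgn]
    ring
  rw [Finset.sum_congr rfl h3, ← Finset.mul_sum, h2, mul_zero]

lemma prodA (b c : ℕ) :
    (∏ i ∈ range b, ((c:ℝ) + 1 + i)) = ((c + b).factorial : ℝ) / (c.factorial : ℝ) := by
  induction b with
  | zero => rw [Finset.prod_range_zero, Nat.add_zero, div_self (by exact_mod_cast c.factorial_ne_zero)]
  | succ b ih =>
      rw [Finset.prod_range_succ, ih]
      have h : (c + (b+1)).factorial = (c + b + 1) * (c + b).factorial := by
        rw [show c + (b+1) = (c+b) + 1 by ring, Nat.factorial_succ]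
      rw [h]
      have hc : ((c.factorial : ℝ)) ≠ 0 := by exact_mod_cast c.factorial_ne_zero
      field_simp
      push_cast
      ring

lemma prodB (b m r : ℕ) (hr : r ≤ m + 1) :
    (∏ i ∈ range b, ((m:ℝ) + 2 + i - r))
      = (((m + 1 - r) + b).factorial : ℝ) / ((m + 1 - r).factorial : ℝ) := by
  induction b with
  | zero => rw [Finset.prod_range_zero, Nat.add_zero, div_self (by exact_mod_cast (m+1-r).factorial_ne_zero)]
  | succ b ih =>
      rw [Finset.prod_range_succ, ih]
      have h : ((m + 1 - r) + (b+1)).factorial = ((m+1-r) + b + 1) * ((m+1-r) + b).factorial := by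
        rw [show (m+1-r) + (b+1) = ((m+1-r)+b) + 1 by ring, Nat.factorial_succ]
      rw [h]
      have hc : (((m+1-r).factorial : ℝ)) ≠ 0 := by exact_mod_cast (m+1-r).factorial_ne_zero
      have hcast : ((m + 1 - r : ℕ) : ℝ) = (m:ℝ) + 1 - r := by
        push_cast [Nat.cast_sub hr]
        ring
      field_simp
      push_cast [hcast]
      ring

lemma claimA (n s : ℕ) (hs : s < n) :
    ∑ r ∈ range (n + 1), (-1 : ℝ) ^ r * ((n+1).choose (r+1)) * ((n+1).choose r)
        * ((s + r + 1).factorial : ℝ) * ((2*n - s - r).factorial : ℝ) = 0 := by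
  set b := n - 1 - s with hb
  set p : Polynomial ℝ :=
    (∏ i ∈ range s, (X + C ((i:ℝ)+2))) * ∏ i ∈ range b, (C ((n:ℝ)+2+(i:ℝ)) - X) with hp
  have hdC : ∀ i : ℕ, (C ((n:ℝ)+2+(i:ℝ)) - X).natDegree = 1 := by
    intro i
    rw [show (C ((n:ℝ)+2+(i:ℝ)) - X) = -(X - C ((n:ℝ)+2+(i:ℝ))) by ring,
      Polynomial.natDegree_neg, Polynomial.natDegree_X_sub_C]
  have hne1 : ∀ i : ℕ, (X + C ((i:ℝ)+2)) ≠ 0 := fun i => Polynomial.X_add_C_ne_zero _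
  have hne2 : ∀ i : ℕ, (C ((n:ℝ)+2+(i:ℝ)) - X) ≠ 0 := by
    intro i h
    have h2 := congrArg Polynomial.natDegree h
    rw [hdC i] at h2
    simp at h2
  have hP1 : (∏ i ∈ range s, (X + C ((i:ℝ)+2))) ≠ 0 :=
    Finset.prod_ne_zero_iff.mpr (fun i _ => hne1 i)
  have hP2 : (∏ i ∈ range b, (C ((n:ℝ)+2+(i:ℝ)) - X)) ≠ 0 :=
    Finset.prod_ne_zero_iff.mpr (fun i _ => hne2 i)
  have hdeg : p.natDegree < n := by
    have h1 : (∏ i ∈ range s, (X + C ((i:ℝ)+2))).natDegree = s := by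
      rw [Polynomial.natDegree_prod _ _ (fun i _ => hne1 i)]
      rw [Finset.sum_congr rfl (fun i _ => Polynomial.natDegree_X_add_C _)]
      simp
    have h2 : (∏ i ∈ range b, (C ((n:ℝ)+2+(i:ℝ)) - X)).natDegree = b := by
      rw [Polynomial.natDegree_prod _ _ (fun i _ => hne2 i)]
      rw [Finset.sum_congr rfl (fun i _ => hdC i)]
      simp
    rw [hp, Polynomial.natDegree_mul hP1 hP2, h1, h2]
    omega
  have master := alt_sum_poly n p hdeg
  have key : ∀ r ∈ range (n+1),
      (-1 : ℝ) ^ r * ((n+1).choose (r+1)) * ((n+1).choose r)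
        * ((s + r + 1).factorial : ℝ) * ((2*n - s - r).factorial : ℝ)
      = (((n+1).factorial : ℝ) * ((n+1).factorial : ℝ) / (n.factorial : ℝ))
          * ((-1 : ℝ) ^ r * (n.choose r) * p.eval (r : ℝ)) := by
    intro r hr
    have hrn : r ≤ n := by simpa [Nat.lt_succ_iff] using hr
    have heval : p.eval (r:ℝ)
        = ((s + r + 1).factorial : ℝ) / ((r+1).factorial : ℝ)
          * (((2*n - s - r).factorial : ℝ) / ((n + 1 - r).factorial : ℝ)) := by
      rw [hp]
      rw [Polynomial.eval_mul, Polynomial.eval_prod, Polynomial.eval_prod]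
      simp only [Polynomial.eval_add, Polynomial.eval_sub, Polynomial.eval_X, Polynomial.eval_C]
      have e1 : (∏ i ∈ range s, ((r:ℝ) + ((i:ℝ)+2)))
          = ((s + r + 1).factorial : ℝ) / ((r+1).factorial : ℝ) := by
        rw [show (∏ i ∈ range s, ((r:ℝ) + ((i:ℝ)+2))) = ∏ i ∈ range s, (((r+1:ℕ):ℝ) + 1 + i) by
          apply Finset.prod_congr rfl; intro i _; push_cast; ring]
        rw [prodA s (r+1), show r+1+s = s+r+1 from by omega]
      have e2 : (∏ i ∈ range b, ((n:ℝ)+2+(i:ℝ) - (r:ℝ)))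
          = ((2*n - s - r).factorial : ℝ) / ((n + 1 - r).factorial : ℝ) := by
        rw [prodB b n r (by omega), show n+1-r+b = 2*n-s-r from by omega]
      rw [e1, e2]
    have c1 : (((n+1).choose (r+1)) : ℝ)
        = ((n+1).factorial : ℝ) / (((r+1).factorial : ℝ) * ((n-r).factorial : ℝ)) := by
      rw [Nat.cast_choose ℝ (by omega : r+1 ≤ n+1), show n+1-(r+1) = n-r from by omega]
    have c2 : (((n+1).choose r) : ℝ)
        = ((n+1).factorial : ℝ) / ((r.factorial : ℝ) * ((n+1-r).factorial : ℝ)) := by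
      rw [Nat.cast_choose ℝ (by omega : r ≤ n+1)]
    have c3 : ((n.choose r) : ℝ)
        = (n.factorial : ℝ) / ((r.factorial : ℝ) * ((n-r).factorial : ℝ)) := by
      rw [Nat.cast_choose ℝ hrn]
    rw [heval, c1, c2, c3]
    have f1 : ((r+1).factorial : ℝ) ≠ 0 := by exact_mod_cast (r+1).factorial_ne_zero
    have f2 : ((n-r).factorial : ℝ) ≠ 0 := by exact_mod_cast (n-r).factorial_ne_zero
    have f3 : (r.factorial : ℝ) ≠ 0 := by exact_mod_cast r.factorial_ne_zero
    have f4 : ((n+1-r).factorial : ℝ) ≠ 0 := by exact_mod_cast (n+1-r).factorial_ne_zero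
    have f5 : (n.factorial : ℝ) ≠ 0 := by exact_mod_cast n.factorial_ne_zero
    field_simp
  rw [Finset.sum_congr rfl key, ← Finset.mul_sum, master, mul_zero]

lemma claimB (n : ℕ) :
    ∑ r ∈ range (n + 1), (-1 : ℝ) ^ r * ((n+1).choose (r+1)) * ((n+1).choose r)
        * ((n + r + 1).factorial : ℝ) * ((n - r).factorial : ℝ)
      = (-1:ℝ)^n * ((n+1).factorial : ℝ) * ((2*n+2).factorial : ℝ) / ((n+2).factorial : ℝ) := by
  set P : Polynomial ℝ := ∏ i ∈ range (n+1), (X + C (i:ℝ)) with hP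
  have hne : ∀ i : ℕ, (X + C ((i:ℝ))) ≠ 0 := fun i => Polynomial.X_add_C_ne_zero _
  have hdeg : P.natDegree < n + 2 := by
    rw [hP, Polynomial.natDegree_prod _ _ (fun i _ => hne i)]
    rw [Finset.sum_congr rfl (fun i _ => Polynomial.natDegree_X_add_C _)]
    simp
  have master := alt_sum_poly (n+2) P hdeg
  -- eval at k : P.eval k = ∏ i < n+1, (k + i)
  have hev : ∀ x : ℝ, P.eval x = ∏ i ∈ range (n+1), (x + i) := by
    intro x
    rw [hP, Polynomial.eval_prod]
    simp
  -- peel off the k = n+2 term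
  rw [show n + 2 + 1 = (n+2) + 1 from rfl, Finset.sum_range_succ] at master
  -- peel off the k = 0 term
  rw [Finset.sum_range_succ'] at master
  have h0 : (-1 : ℝ) ^ 0 * ((n+2).choose 0) * P.eval ((0:ℕ) : ℝ) = 0 := by
    rw [hev]
    rw [Finset.prod_eq_zero (Finset.mem_range.mpr (by omega : 0 < n+1))]
    · ring
    · norm_num
  rw [h0, add_zero] at master
  have hlast : P.eval ((n+2 : ℕ) : ℝ) = ((2*n+2).factorial : ℝ) / ((n+1).factorial : ℝ) := by
    rw [hev]
    rw [show (∏ i ∈ range (n+1), (((n+2:ℕ):ℝ) + i)) = ∏ i ∈ range (n+1), (((n+1:ℕ):ℝ) + 1 + i) from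
      Finset.prod_congr rfl (fun i _ => by push_cast; ring)]
    rw [prodA (n+1) (n+1), show n+1+(n+1) = 2*n+2 from by omega]
  rw [hlast] at master
  -- now: ∑ r in range (n+1), (-1)^(r+1) * C(n+2, r+1) * P.eval (r+1) + (-1)^(n+2) * C(n+2,n+2) * ((2n+2)!/(n+1)!) = 0
  have key : ∀ r ∈ range (n+1),
      (-1 : ℝ) ^ r * ((n+1).choose (r+1)) * ((n+1).choose r)
        * ((n + r + 1).factorial : ℝ) * ((n - r).factorial : ℝ)
      = (-(((n+1).factorial : ℝ) * ((n+1).factorial : ℝ) / ((n+2).factorial : ℝ)))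
          * ((-1 : ℝ) ^ (r+1) * ((n+2).choose (r+1)) * P.eval (((r+1:ℕ)) : ℝ)) := by
    intro r hr
    have hrn : r ≤ n := by simpa [Nat.lt_succ_iff] using hr
    have heval : P.eval (((r+1:ℕ)) : ℝ)
        = ((n + r + 1).factorial : ℝ) / ((r.factorial : ℝ)) := by
      rw [hev]
      rw [show (∏ i ∈ range (n+1), (((r+1:ℕ):ℝ) + i)) = ∏ i ∈ range (n+1), ((r:ℝ) + 1 + i) from
        Finset.prod_congr rfl (fun i _ => by push_cast; ring)]
      rw [prodA (n+1) r, show r+(n+1) = n+r+1 from by omega]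
    have c1 : (((n+1).choose (r+1)) : ℝ)
        = ((n+1).factorial : ℝ) / (((r+1).factorial : ℝ) * ((n-r).factorial : ℝ)) := by
      rw [Nat.cast_choose ℝ (by omega : r+1 ≤ n+1), show n+1-(r+1) = n-r from by omega]
    have c2 : (((n+1).choose r) : ℝ)
        = ((n+1).factorial : ℝ) / ((r.factorial : ℝ) * ((n+1-r).factorial : ℝ)) := by
      rw [Nat.cast_choose ℝ (by omega : r ≤ n+1)]
    have c3 : (((n+2).choose (r+1)) : ℝ)
        = ((n+2).factorial : ℝ) / (((r+1).factorial : ℝ) * ((n+1-r).factorial : ℝ)) := by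
      rw [Nat.cast_choose ℝ (by omega : r+1 ≤ n+2), show n+2-(r+1) = n+1-r from by omega]
    rw [heval, c1, c2, c3]
    have f1 : ((r+1).factorial : ℝ) ≠ 0 := by exact_mod_cast (r+1).factorial_ne_zero
    have f2 : ((n-r).factorial : ℝ) ≠ 0 := by exact_mod_cast (n-r).factorial_ne_zero
    have f3 : (r.factorial : ℝ) ≠ 0 := by exact_mod_cast r.factorial_ne_zero
    have f4 : ((n+1-r).factorial : ℝ) ≠ 0 := by exact_mod_cast (n+1-r).factorial_ne_zero
    have f5 : ((n+2).factorial : ℝ) ≠ 0 := by exact_mod_cast (n+2).factorial_ne_zero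
    rw [pow_succ]
    field_simp
  rw [Finset.sum_congr rfl key, ← Finset.mul_sum]
  have hsum : ∑ r ∈ range (n+1),
      ((-1 : ℝ) ^ (r+1) * ((n+2).choose (r+1)) * P.eval (((r+1:ℕ)) : ℝ))
      = -((-1:ℝ)^(n+2) * ((n+2).choose (n+2)) * (((2*n+2).factorial : ℝ) / ((n+1).factorial : ℝ))) := by
    have := master
    linarith [master]
  rw [hsum]
  have f5 : ((n+2).factorial : ℝ) ≠ 0 := by exact_mod_cast (n+2).factorial_ne_zero
  have f6 : ((n+1).factorial : ℝ) ≠ 0 := by exact_mod_cast (n+1).factorial_ne_zero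
  rw [Nat.choose_self]
  push_cast
  rw [show ((-1:ℝ))^(n+2) = (-1)^n from by rw [pow_add]; norm_num]
  field_simp

lemma term_int (n s r : ℕ) (hs : s ≤ n) (hr : r ≤ n) :
    ∫ t in (-1:ℝ)..1,
        (((t-1)/2)^s * ((t+1)/2)^(n-s) * (((t-1)/2)^r * ((t+1)/2)^(n-r)) * (1-t))
      = (-1:ℝ)^(s+r) * 4 * ((s+r+1).factorial : ℝ) * (((2*n-s-r).factorial : ℝ))
          / (((2*n+2).factorial : ℝ)) := by
  have h2n : (2:ℝ)^s * 2^(n-s) * (2^r * 2^(n-r)) = 2^n * 2^n := by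
    rw [← pow_add, ← pow_add, ← pow_add,
      show s + (n-s) + (r + (n-r)) = n + n from by omega, pow_add]
  have h1 : ∀ x : ℝ, x ∈ Set.uIcc (-1:ℝ) 1 →
      ((x-1)/2)^s * ((x+1)/2)^(n-s) * (((x-1)/2)^r * ((x+1)/2)^(n-r)) * (1-x)
      = (-(1:ℝ)/(2^s*2^(n-s)*(2^r*2^(n-r)))) * ((x-1)^(s+r+1) * (x+1)^((n-s)+(n-r))) := by
    intro x _
    rw [div_pow, div_pow, div_pow, div_pow, pow_add, pow_add, pow_succ]
    have hne : ∀ m : ℕ, ((2:ℝ)^m) ≠ 0 := fun m => by positivity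
    field_simp
    ring
  rw [intervalIntegral.integral_congr h1, intervalIntegral.integral_const_mul, beta_int]
  have e1 : (n-s) + (n-r) = 2*n - s - r := by omega
  have e2 : s + r + 1 + (2*n - s - r) + 1 = 2*n + 2 := by omega
  rw [e1, e2]
  have h4 : (2:ℝ)^(2*n+2) = 2^n * 2^n * 4 := by
    rw [show 2*n+2 = n + n + 2 from by omega, pow_add, pow_add]
    norm_num
  rw [h2n, h4, pow_succ]
  have hfne : (((2*n+2).factorial : ℝ)) ≠ 0 := by exact_mod_cast (2*n+2).factorial_ne_zero
  have h2ne : ((2:ℝ)^n) ≠ 0 := by positivity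
  field_simp

theorem integral_one_sub_mul_jacobiP_zero_two_mul_one_one (n : ℕ) :
    ∫ t in (-1 : ℝ)..1, (1 - t) * jacobiP 0 2 n t * jacobiP 1 1 n t
      = 2 * ((n : ℝ) + 1) := by
  have hexp : ∀ t ∈ Set.uIcc (-1:ℝ) 1, (1 - t) * jacobiP 0 2 n t * jacobiP 1 1 n t
      = ∑ s ∈ range (n+1), ∑ r ∈ range (n+1),
          ((n.choose (n-s) : ℝ) * (((n+2).choose s : ℕ) : ℝ)
            * ((((n+1).choose (n-r) : ℕ) : ℝ) * (((n+1).choose r : ℕ) : ℝ)))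
          * (((t-1)/2)^s * ((t+1)/2)^(n-s) * (((t-1)/2)^r * ((t+1)/2)^(n-r)) * (1-t)) := by
    intro t _
    simp only [jacobiP, Nat.add_zero]
    rw [mul_assoc, Finset.sum_mul_sum, Finset.mul_sum]
    apply Finset.sum_congr rfl
    intro s _
    rw [Finset.mul_sum]
    apply Finset.sum_congr rfl
    intro r _
    ring
  rw [intervalIntegral.integral_congr hexp]
  rw [intervalIntegral.integral_finset_sum (fun s _ => by
    apply Continuous.intervalIntegrable
    apply continuous_finset_sum
    intro r _
    fun_prop)]
  have step1 : ∀ s ∈ range (n+1),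
      (∫ t in (-1:ℝ)..1, ∑ r ∈ range (n+1),
          ((n.choose (n-s) : ℝ) * (((n+2).choose s : ℕ) : ℝ)
            * ((((n+1).choose (n-r) : ℕ) : ℝ) * (((n+1).choose r : ℕ) : ℝ)))
          * (((t-1)/2)^s * ((t+1)/2)^(n-s) * (((t-1)/2)^r * ((t+1)/2)^(n-r)) * (1-t)))
      = ((-1:ℝ)^s * (n.choose s : ℝ) * (((n+2).choose s : ℕ) : ℝ) * 4 / ((2*n+2).factorial : ℝ))
          * ∑ r ∈ range (n+1), (-1 : ℝ) ^ r * (((n+1).choose (r+1) : ℕ) : ℝ)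
              * (((n+1).choose r : ℕ) : ℝ)
              * ((s + r + 1).factorial : ℝ) * ((2*n - s - r).factorial : ℝ) := by
    intro s hs
    have hsn : s ≤ n := by simpa [Nat.lt_succ_iff] using hs
    rw [intervalIntegral.integral_finset_sum (fun r _ => by
      apply Continuous.intervalIntegrable; fun_prop)]
    rw [Finset.mul_sum]
    apply Finset.sum_congr rfl
    intro r hr
    have hrn : r ≤ n := by simpa [Nat.lt_succ_iff] using hr
    rw [intervalIntegral.integral_const_mul, term_int n s r hsn hrn]
    rw [show n.choose (n-s) = n.choose s from Nat.choose_symm hsn]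
    rw [show (n+1).choose (n-r) = (n+1).choose (r+1) by
      rw [show n - r = n + 1 - (r+1) from by omega]
      exact Nat.choose_symm (by omega)]
    rw [pow_add]
    ring
  rw [Finset.sum_congr rfl step1]
  rw [Finset.sum_eq_single_of_mem n (Finset.self_mem_range_succ n) (fun s hs hne => by
    rw [claimA n s (by have := Finset.mem_range.mp hs; omega), mul_zero])]
  have hinner : ∑ r ∈ range (n + 1), (-1 : ℝ) ^ r * (((n+1).choose (r+1) : ℕ) : ℝ)
      * (((n+1).choose r : ℕ) : ℝ)
      * ((n + r + 1).factorial : ℝ) * ((2*n - n - r).factorial : ℝ)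
      = (-1:ℝ)^n * ((n+1).factorial : ℝ) * ((2*n+2).factorial : ℝ) / ((n+2).factorial : ℝ) := by
    rw [show ∀ (f : ℕ → ℝ), (∑ r ∈ range (n+1), f r) = ∑ r ∈ range (n+1), f r from fun _ => rfl]
    rw [← claimB n]
    apply Finset.sum_congr rfl
    intro r hr
    rw [show 2*n - n - r = n - r from by omega]
  rw [hinner]
  rw [Nat.choose_self]
  have c1 : (((n+2).choose n : ℕ) : ℝ)
      = ((n+2).factorial : ℝ) / ((n.factorial : ℝ) * ((2:ℕ).factorial : ℝ)) := by
    rw [Nat.cast_choose ℝ (by omega : n ≤ n+2), show n+2-n = 2 from by omega]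
  rw [c1]
  have hsgn : (-1:ℝ)^n * (-1:ℝ)^n = 1 := by
    rw [← pow_add, show n + n = 2*n from by omega, pow_mul]
    norm_num
  have f1 : ((2*n+2).factorial : ℝ) ≠ 0 := by exact_mod_cast (2*n+2).factorial_ne_zero
  have f2 : ((n+2).factorial : ℝ) ≠ 0 := by exact_mod_cast (n+2).factorial_ne_zero
  have f3 : (n.factorial : ℝ) ≠ 0 := by exact_mod_cast n.factorial_ne_zero
  have f4 : ((2:ℕ).factorial : ℝ) = 2 := by norm_num [Nat.factorial]
  have f5 : ((n+2).factorial : ℝ) = ((n:ℝ)+2) * ((n:ℝ)+1) * (n.factorial : ℝ) := by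
    rw [show n+2 = (n+1)+1 from rfl, Nat.factorial_succ, Nat.factorial_succ]
    push_cast
    ring
  have f6 : ((n+1).factorial : ℝ) = ((n:ℝ)+1) * (n.factorial : ℝ) := by
    rw [Nat.factorial_succ]
    push_cast
    ring
  rw [f4, f6, f5]
  field_simp
  linear_combination 4 * hsgn
end

section
/- For all odd n ≥ 1, the integral over [-1,1] of P_{n-1}^{(0,2)}(t)·(1 + P_n^{(0,0)}(t)) dt equals 2·(-1)^{n-1} = 2. More generally, for all n ≥ 1, (1/2)·∫_{-1}^{1} P_{n-1}^{(0,2)}(t)·(P_n^{(0,0)}(t) + 1) dt = (-1)^{n-1}. -/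
open MeasureTheory intervalIntegral Finset

open Polynomial in
lemma JacAux.findiff : ∀ (n : ℕ) (P : ℝ[X]), P.natDegree < n →
    ∑ k ∈ range (n+1), (-1:ℝ)^k * (n.choose k) * P.eval (k : ℝ) = 0 := by
  intro n
  induction n with
  | zero => intro P hP; omega
  | succ n IH =>
    intro P hP
    set Q : ℝ[X] := P - P.comp (X + 1) with hQdef
    have hQeval : ∀ k : ℕ, Q.eval (k:ℝ) = P.eval (k:ℝ) - P.eval ((k:ℝ)+1) := by
      intro k; simp [hQdef, eval_comp]
    have key : ∑ k ∈ range (n+2), (-1:ℝ)^k * ((n+1).choose k) * P.eval (k : ℝ)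
        = ∑ k ∈ range (n+1), (-1:ℝ)^k * (n.choose k) * Q.eval (k : ℝ) := by
      have hA : ∑ k ∈ range (n+2), (-1:ℝ)^k * ((n+1).choose k) * P.eval (k : ℝ)
          = P.eval 0 + ∑ j ∈ range (n+1), (-1:ℝ)^(j+1) * ((n.choose j : ℝ) + (n.choose (j+1) : ℝ)) * P.eval ((j:ℝ)+1) := by
        rw [Finset.sum_range_succ' _ (n+1)]
        simp only [Nat.choose_zero_right, Nat.cast_one, pow_zero, Nat.cast_zero, mul_one, one_mul]
        rw [add_comm]
        congr 1
        apply Finset.sum_congr rfl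
        intro j hj
        rw [Nat.choose_succ_succ]
        push_cast
        ring
      rw [hA]
      simp_rw [hQeval, mul_sub]
      rw [Finset.sum_sub_distrib]
      have hB : ∑ k ∈ range (n+1), (-1:ℝ)^k * (n.choose k) * P.eval (k:ℝ)
          = P.eval 0 + ∑ j ∈ range n, (-1:ℝ)^(j+1) * (n.choose (j+1)) * P.eval ((j:ℝ)+1) := by
        rw [Finset.sum_range_succ' _ n]
        simp only [Nat.choose_zero_right, Nat.cast_one, Nat.cast_zero, pow_zero, mul_one, one_mul]
        rw [add_comm]
        congr 1
        apply Finset.sum_congr rfl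
        intro j hj
        push_cast
        ring
      rw [hB]
      have hC : ∑ j ∈ range n, (-1:ℝ)^(j+1) * (n.choose (j+1)) * P.eval ((j:ℝ)+1)
          = ∑ j ∈ range (n+1), (-1:ℝ)^(j+1) * (n.choose (j+1)) * P.eval ((j:ℝ)+1) := by
        rw [Finset.sum_range_succ]
        simp
      rw [hC, add_sub_assoc, ← Finset.sum_sub_distrib]
      congr 1
      apply Finset.sum_congr rfl
      intro j hj
      ring
    rw [key]
    by_cases hQ0 : Q = 0
    · simp [hQ0]
    · apply IH
      by_cases hdeg : P.natDegree = 0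
      · exfalso
        obtain ⟨a, rfl⟩ := Polynomial.natDegree_eq_zero.mp hdeg
        exact hQ0 (by rw [hQdef]; simp)
      · have hX1 : (X + 1 : ℝ[X]).natDegree = 1 := by
          simpa using Polynomial.natDegree_X_add_C (1:ℝ)
        have hcomp_deg : (P.comp (X + 1)).natDegree = P.natDegree := by
          rw [natDegree_comp, hX1, mul_one]
        have hP0 : P ≠ 0 := fun h => hdeg (by simp [h])
        have hlc : P.leadingCoeff = (P.comp (X+1)).leadingCoeff := by
          rw [Polynomial.leadingCoeff_comp (by rw [hX1]; norm_num)]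
          rw [show ((X:ℝ[X]) + 1) = X + C 1 by simp, (Polynomial.monic_X_add_C (1:ℝ)).leadingCoeff, one_pow, mul_one]
        have hdlt : Q.degree < P.degree := by
          apply Polynomial.degree_sub_lt _ hP0 hlc
          have hcomp0 : P.comp (X+1) ≠ 0 := fun h => hdeg (by rw [← hcomp_deg, h]; simp)
          rw [Polynomial.degree_eq_natDegree hP0, Polynomial.degree_eq_natDegree hcomp0, hcomp_deg]
        have : Q.natDegree < P.natDegree := by
          have := Polynomial.natDegree_lt_natDegree hQ0 hdlt
          exact this
        omega


lemma JacAux.beta_nat (s : ℕ) : ∀ m : ℕ, ∫ x in (0:ℝ)..1, x ^ s * (1 - x) ^ m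
    = (s.factorial : ℝ) * m.factorial / (s + m + 1).factorial := by
  induction s with
  | zero =>
    intro m
    simp only [pow_zero, one_mul]
    have : ∀ x : ℝ, (1 - x) ^ m = ((-1 : ℝ) * x + 1) ^ m := by intro x; ring_nf
    simp_rw [this]
    rw [intervalIntegral.integral_comp_mul_add (f := fun y : ℝ => y ^ m) (by norm_num : (-1:ℝ) ≠ 0) 1]
    simp [integral_pow]
    have h : ((m+1).factorial : ℝ) = (m+1) * m.factorial := by
      rw [Nat.factorial_succ]; push_cast; ring
    rw [h]
    have h1 : (m : ℝ) + 1 ≠ 0 := by positivity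
    have h2 : (m.factorial : ℝ) ≠ 0 := by positivity
    field_simp
  | succ s ih =>
    intro m
    have hm : ((m:ℝ)+1) ≠ 0 := by positivity
    have key := intervalIntegral.integral_mul_deriv_eq_deriv_mul_of_hasDerivAt
        (a := (0:ℝ)) (b := 1)
        (u := fun x => x ^ (s+1)) (u' := fun x => ((s:ℝ)+1) * x ^ s)
        (v := fun x => -(1 - x) ^ (m+1) / ((m:ℝ)+1)) (v' := fun x => (1 - x) ^ m)
        (by fun_prop) (by fun_prop)
        (fun x _ => by
          simpa using (hasDerivAt_pow (s+1) x))
        (fun x _ => by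
          have h1 : HasDerivAt (fun x : ℝ => (1 - x) ^ (m+1)) (((m:ℝ)+1) * (1-x)^m * (-1)) x := by
            exact (hasDerivAt_pow (m+1) (1-x)).comp x (by simpa using ((hasDerivAt_id x).const_sub 1)) |>.congr_deriv (by push_cast; ring)
          have := (h1.neg.div_const ((m:ℝ)+1))
          convert this using 1
          · funext y; simp only [Pi.neg_apply]
          · rw [eq_div_iff hm]; ring)
        ((by fun_prop : Continuous fun x : ℝ => ((s:ℝ)+1) * x ^ s).intervalIntegrable 0 1) ((by fun_prop : Continuous fun x : ℝ => (1 - x) ^ m).intervalIntegrable 0 1)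
    rw [key]
    have e1 : ∫ x in (0:ℝ)..1, ((s:ℝ)+1) * x ^ s * (-(1 - x) ^ (m + 1) / ((m:ℝ) + 1))
        = (-((s:ℝ)+1) / ((m:ℝ)+1)) * ∫ x in (0:ℝ)..1, x ^ s * (1 - x) ^ (m+1) := by
      rw [← intervalIntegral.integral_const_mul]
      congr 1; funext x; ring
    rw [e1, ih (m+1)]
    have hfac : ((s + (m+1) + 1).factorial : ℝ) = ((s+1) + m + 1).factorial := by norm_num; ring_nf
    have h2 : ((m+1).factorial : ℝ) = (m+1) * m.factorial := by rw [Nat.factorial_succ]; push_cast; ring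
    have h3 : (((s+1)).factorial : ℝ) = (s+1) * s.factorial := by rw [Nat.factorial_succ]; push_cast; ring
    have h4 : ((s + (m+1) + 1) : ℕ) = (s+1) + m + 1 := by ring
    rw [h4, h2, h3]
    have h5 : (((s+1) + m + 1).factorial : ℝ) ≠ 0 := by positivity
    have h6 : ((m:ℝ)+1) ≠ 0 := hm
    field_simp
    ring


lemma JacAux.base_int (s m : ℕ) : ∫ t in (-1:ℝ)..1, ((t-1)/2) ^ s * ((t+1)/2) ^ m
    = 2 * (-1)^s * (s.factorial : ℝ) * m.factorial / (s + m + 1).factorial := by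
  have h : ∀ t : ℝ, ((t-1)/2) ^ s * ((t+1)/2) ^ m
      = (fun u : ℝ => (-1)^s * ((1 - u) ^ s * u ^ m)) ((1/2) * t + 1/2) := by
    intro t; simp only
    have e : (t-1)/2 = -(1 - ((1/2)*t + 1/2)) := by ring
    rw [e, neg_pow]
    ring
  simp_rw [h]
  rw [intervalIntegral.integral_comp_mul_add (f := fun u : ℝ => (-1)^s * ((1-u)^s * u^m)) (by norm_num : (1/2:ℝ) ≠ 0) (1/2)]
  norm_num
  have : ∫ u in (0:ℝ)..1, (1-u)^s * u^m = ∫ u in (0:ℝ)..1, u^m * (1-u)^s := by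
    congr 1; funext u; ring
  rw [this, JacAux.beta_nat m s]
  have : ((m + s + 1) : ℕ) = s + m + 1 := by ring
  rw [this]
  ring


open Polynomial in
lemma JacAux.sum_choose_zero (n a b : ℕ) (h : a + b < n) :
    ∑ k ∈ range (n+1), (-1:ℝ)^k * (n.choose k) * ((a+k).choose a) * ((b + (n-k)).choose b) = 0 := by
  set P : ℝ[X] := C ((a.factorial : ℝ)⁻¹ * (b.factorial : ℝ)⁻¹) *
    ((ascPochhammer ℝ a).comp (X + 1)) * ((ascPochhammer ℝ b).comp (C ((n:ℝ) + 1) - X)) with hP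
  have hdeg : P.natDegree < n := by
    have h1 : ((ascPochhammer ℝ a).comp (X + 1)).natDegree = a := by
      rw [natDegree_comp]
      simp [ascPochhammer_natDegree, (by simpa using Polynomial.natDegree_X_add_C (1:ℝ) : (X + 1 : ℝ[X]).natDegree = 1)]
    have h2 : ((ascPochhammer ℝ b).comp (C ((n:ℝ) + 1) - X)).natDegree = b := by
      rw [natDegree_comp]
      have : (C ((n:ℝ) + 1) - X).natDegree = 1 := by
        rw [show (C ((n:ℝ)+1) - X) = -(X - C ((n:ℝ)+1)) by ring, natDegree_neg, natDegree_X_sub_C]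
      rw [this, ascPochhammer_natDegree, mul_one]
    calc P.natDegree ≤ (C ((a.factorial : ℝ)⁻¹ * (b.factorial : ℝ)⁻¹) *
          ((ascPochhammer ℝ a).comp (X + 1))).natDegree
          + ((ascPochhammer ℝ b).comp (C ((n:ℝ) + 1) - X)).natDegree := natDegree_mul_le
      _ ≤ (C ((a.factorial : ℝ)⁻¹ * (b.factorial : ℝ)⁻¹)).natDegree
          + ((ascPochhammer ℝ a).comp (X + 1)).natDegree + _ := by
            exact Nat.add_le_add_right natDegree_mul_le _
      _ < n := by rw [natDegree_C, h1, h2]; omega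
  have heval : ∀ k : ℕ, k ≤ n → P.eval (k : ℝ)
      = ((a+k).choose a : ℝ) * ((b + (n-k)).choose b : ℝ) := by
    intro k hk
    have e1 : ((ascPochhammer ℝ a).comp (X + 1)).eval (k:ℝ)
        = (a.factorial : ℝ) * ((a+k).choose a) := by
      rw [eval_comp]
      have : ((X + 1 : ℝ[X]).eval (k:ℝ)) = (((k+1 : ℕ)):ℝ) := by push_cast; simp
      rw [this, ← ascPochhammer_eval_cast, ascPochhammer_nat_eq_ascFactorial,
        Nat.ascFactorial_eq_factorial_mul_choose]
      push_cast [Nat.add_comm k a]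
      ring
    have e2 : ((ascPochhammer ℝ b).comp (C ((n:ℝ) + 1) - X)).eval (k:ℝ)
        = (b.factorial : ℝ) * ((b + (n-k)).choose b) := by
      rw [eval_comp]
      have : ((C ((n:ℝ)+1) - X).eval (k:ℝ)) = (((n - k + 1 : ℕ)):ℝ) := by
        simp
        push_cast [Nat.cast_sub hk]
        ring
      rw [this, ← ascPochhammer_eval_cast, ascPochhammer_nat_eq_ascFactorial,
        Nat.ascFactorial_eq_factorial_mul_choose]
      push_cast [Nat.add_comm (n-k) b]
      ring
    rw [hP]
    simp only [eval_mul, eval_C, e1, e2]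
    have ha : (a.factorial : ℝ) ≠ 0 := by positivity
    have hb : (b.factorial : ℝ) ≠ 0 := by positivity
    field_simp
  have := JacAux.findiff n P hdeg
  rw [← this]
  apply Finset.sum_congr rfl
  intro k hk
  rw [heval k (by simpa [Nat.lt_succ_iff] using hk)]
  ring


lemma JacAux.alt_partial (N : ℕ) : ∀ m : ℕ,
    ∑ s ∈ range (m+1), (-1:ℝ)^s * ((N+1).choose s) = (-1)^m * (N.choose m) := by
  intro m
  induction m with
  | zero => simp
  | succ m IH =>
    rw [Finset.sum_range_succ, IH, Nat.choose_succ_succ]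
    push_cast
    ring

lemma JacAux.cont (a b n : ℕ) : Continuous (jacobiP a b n) := by
  unfold jacobiP
  apply continuous_finset_sum
  intro s _
  fun_prop

lemma JacAux.ortho (n a b : ℕ) (h : a + b < n) :
    ∫ t in (-1:ℝ)..1, ((t-1)/2)^a * ((t+1)/2)^b * jacobiP 0 0 n t = 0 := by
  have expand : ∀ t : ℝ, ((t-1)/2)^a * ((t+1)/2)^b * jacobiP 0 0 n t
      = ∑ k ∈ range (n+1), ((n.choose (n-k) : ℝ) * (n.choose k))
          * (((t-1)/2)^(a+k) * ((t+1)/2)^(b+(n-k))) := by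
    intro t
    unfold jacobiP
    rw [Finset.mul_sum]
    apply Finset.sum_congr rfl
    intro k _
    rw [Nat.add_zero]
    rw [pow_add, pow_add]
    ring
  simp_rw [expand]
  rw [intervalIntegral.integral_finset_sum]
  swap
  · intro k _
    apply Continuous.intervalIntegrable
    fun_prop
  have term : ∀ k ∈ range (n+1),
      (∫ t in (-1:ℝ)..1, ((n.choose (n-k) : ℝ) * (n.choose k))
        * (((t-1)/2)^(a+k) * ((t+1)/2)^(b+(n-k))))
      = (2 * (-1:ℝ)^a * a.factorial * b.factorial * n.factorial / (a+b+n+1).factorial)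
        * ((-1:ℝ)^k * (n.choose k) * ((a+k).choose a) * ((b + (n-k)).choose b)) := by
    intro k hk
    have hk' : k ≤ n := by simpa [Nat.lt_succ_iff] using hk
    rw [intervalIntegral.integral_const_mul, JacAux.base_int]
    have hidx : (a + k) + (b + (n-k)) + 1 = a + b + n + 1 := by omega
    rw [hidx]
    -- nat identity
    have hnat : n.choose (n-k) * n.choose k * (a+k).factorial * (b+(n-k)).factorial
        = a.factorial * b.factorial * n.factorial
          * (n.choose k * ((a+k).choose a * (b+(n-k)).choose b)) := by
      have f1 : (a+k).factorial = (a+k).choose a * a.factorial * k.factorial := by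
        rw [← Nat.choose_mul_factorial_mul_factorial (Nat.le_add_right a k)]
        congr 2
        omega
      have f2 : (b+(n-k)).factorial = (b+(n-k)).choose b * b.factorial * (n-k).factorial := by
        rw [← Nat.choose_mul_factorial_mul_factorial (Nat.le_add_right b (n-k))]
        congr 2
        omega
      have f3 : n.choose k * k.factorial * (n-k).factorial = n.factorial :=
        Nat.choose_mul_factorial_mul_factorial hk'
      rw [Nat.choose_symm hk', f1, f2, ← f3]
      ring
    rw [Nat.choose_symm hk'] at hnat
    have hcast : (n.choose k : ℝ) * n.choose k * (a+k).factorial * (b+(n-k)).factorial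
        = (a.factorial : ℝ) * b.factorial * n.factorial
          * (n.choose k * ((a+k).choose a * (b+(n-k)).choose b)) := by
      exact_mod_cast congrArg (Nat.cast : ℕ → ℝ) hnat
    have hne : ((a+b+n+1).factorial : ℝ) ≠ 0 := by positivity
    rw [pow_add]
    field_simp
    rw [Nat.choose_symm hk']
    linear_combination hcast
  rw [Finset.sum_congr rfl term, ← Finset.mul_sum, JacAux.sum_choose_zero n a b h, mul_zero]

lemma JacAux.int_jacobi02 (m : ℕ) :
    ∫ t in (-1:ℝ)..1, jacobiP 0 2 m t = 2 * (-1:ℝ)^m := by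
  unfold jacobiP
  rw [intervalIntegral.integral_finset_sum]
  swap
  · intro k _
    apply Continuous.intervalIntegrable
    fun_prop
  have term : ∀ s ∈ range (m+1),
      (∫ t in (-1:ℝ)..1, ((m + 0).choose (m-s) : ℝ) * ((m + 2).choose s)
        * ((t-1)/2)^s * ((t+1)/2)^(m-s))
      = (2 / ((m:ℝ)+1)) * ((-1:ℝ)^s * (((m+1)+1).choose s)) := by
    intro s hs
    have hs' : s ≤ m := by simpa [Nat.lt_succ_iff] using hs
    have : ∀ t : ℝ, ((m + 0).choose (m-s) : ℝ) * ((m + 2).choose s)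
        * ((t-1)/2)^s * ((t+1)/2)^(m-s)
        = (((m + 0).choose (m-s) : ℝ) * ((m + 2).choose s)) * (((t-1)/2)^s * ((t+1)/2)^(m-s)) := by
      intro t; ring
    simp_rw [this]
    rw [intervalIntegral.integral_const_mul, JacAux.base_int]
    have hidx : s + (m - s) + 1 = m + 1 := by omega
    rw [hidx, Nat.add_zero, Nat.choose_symm hs']
    have f3 : m.choose s * s.factorial * (m-s).factorial = m.factorial :=
      Nat.choose_mul_factorial_mul_factorial hs'
    have f3' : (m.choose s : ℝ) * s.factorial * (m-s).factorial = m.factorial := by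
      exact_mod_cast congrArg (Nat.cast : ℕ → ℝ) f3
    have hfac : ((m+1).factorial : ℝ) = ((m:ℝ)+1) * m.factorial := by
      rw [Nat.factorial_succ]; push_cast; ring
    have h1 : ((m:ℝ)+1) ≠ 0 := by positivity
    have h2 : ((m+1).factorial : ℝ) ≠ 0 := by positivity
    have h3 : (m.factorial : ℝ) ≠ 0 := by positivity
    have hidx2 : ((m+1)+1 : ℕ) = m + 2 := by omega
    rw [hidx2, hfac]
    field_simp
    linear_combination (((m+2).choose s : ℝ)) * f3'
  rw [Finset.sum_congr rfl term, ← Finset.mul_sum, JacAux.alt_partial (m+1) m,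
    Nat.choose_succ_self_right]
  push_cast
  field_simp

lemma JacAux.int_cross (n : ℕ) (hn : 1 ≤ n) :
    ∫ t in (-1:ℝ)..1, jacobiP 0 2 (n-1) t * jacobiP 0 0 n t = 0 := by
  have expand : ∀ t : ℝ, jacobiP 0 2 (n-1) t * jacobiP 0 0 n t
      = ∑ s ∈ range ((n-1)+1), (((n-1) + 0).choose ((n-1)-s) : ℝ) * (((n-1) + 2).choose s)
          * (((t-1)/2)^s * ((t+1)/2)^((n-1)-s) * jacobiP 0 0 n t) := by
    intro t
    rw [show jacobiP 0 2 (n-1) t = ∑ s ∈ range ((n-1)+1),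
      (((n-1) + 0).choose ((n-1)-s) : ℝ) * (((n-1) + 2).choose s)
        * ((t-1)/2)^s * ((t+1)/2)^((n-1)-s) from rfl, Finset.sum_mul]
    apply Finset.sum_congr rfl
    intro s _
    ring
  simp_rw [expand]
  rw [intervalIntegral.integral_finset_sum]
  swap
  · intro k _
    apply Continuous.intervalIntegrable
    have := JacAux.cont 0 0 n
    fun_prop
  apply Finset.sum_eq_zero
  intro s hs
  have hs' : s ≤ n - 1 := by simpa [Nat.lt_succ_iff] using hs
  rw [intervalIntegral.integral_const_mul, JacAux.ortho n s ((n-1)-s) (by omega), mul_zero]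

theorem integral_jacobiP_mul_one_add_legendre :
    (∀ n : ℕ, 1 ≤ n → Odd n →
      ∫ t in (-1 : ℝ)..1, jacobiP 0 2 (n - 1) t * (1 + jacobiP 0 0 n t) = 2) ∧
    (∀ n : ℕ, 1 ≤ n →
      (1 / 2 : ℝ) * ∫ t in (-1 : ℝ)..1, jacobiP 0 2 (n - 1) t * (jacobiP 0 0 n t + 1)
        = (-1 : ℝ) ^ (n - 1)) := by
  have main : ∀ n : ℕ, 1 ≤ n →
      ∫ t in (-1 : ℝ)..1, jacobiP 0 2 (n - 1) t * (jacobiP 0 0 n t + 1)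
        = 2 * (-1 : ℝ) ^ (n - 1) := by
    intro n hn
    have expand : ∀ t : ℝ, jacobiP 0 2 (n-1) t * (jacobiP 0 0 n t + 1)
        = jacobiP 0 2 (n-1) t * jacobiP 0 0 n t + jacobiP 0 2 (n-1) t := by
      intro t; ring
    simp_rw [expand]
    rw [intervalIntegral.integral_add]
    · rw [JacAux.int_cross n hn, JacAux.int_jacobi02 (n-1), zero_add]
    · apply Continuous.intervalIntegrable
      have h1 := JacAux.cont 0 2 (n-1)
      have h2 := JacAux.cont 0 0 n
      fun_prop
    · exact (JacAux.cont 0 2 (n-1)).intervalIntegrable _ _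
  constructor
  · intro n hn hodd
    have : ∀ t : ℝ, jacobiP 0 2 (n-1) t * (1 + jacobiP 0 0 n t)
        = jacobiP 0 2 (n-1) t * (jacobiP 0 0 n t + 1) := by intro t; ring
    simp_rw [this]
    rw [main n hn]
    have : Even (n-1) := Nat.Odd.sub_odd hodd odd_one
    rw [this.neg_one_pow]
    ring
  · intro n hn
    rw [main n hn]
    ring
end
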